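/- Let N be an abelian group, A a unital algebra, σ : N → Aut(A) and m : N → Aut(A) maps, a : N → Aˣ units with m_h = Ad(a_h) ∘ σ_h, and μ : N × N → ℂˣ scalars with μ(h,h')·a_{hh'} = a_h · σ_h(a_{h'}). Suppose n is an automorphism commuting with each σ_h and there are units w_h and scalars c_h ∈ ℂˣ with n(a_h) = c_h · w_h · a_h and w_{hh'} = w_h · m_h(w_{h'}). Then the map h ↦ c_h is a group homomorphism from N to ℂˣ. -/
import Mathlib


/-- The character argument: given σ : N → Aut(A), units a_h with scalars μ(h,h')
satisfying a_h·σ_h(a_{h'}) = μ(h,h')·a_{hh'}, an automorphism n commuting with all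
σ_h, units w_h satisfying the cocycle identity w_{hh'} = w_h·m_h(w_{h'}) for
m_h = Ad(a_h)∘σ_h, and scalars c_h with n(a_h) = c_h·w_h·a_h, the map h ↦ c_h is a
group homomorphism N → ℂˣ. -/
theorem stmt9 {N A : Type*} [CommGroup N] [Ring A] [Algebra ℂ A] [Nontrivial A]
    (σ : N →* (A ≃ₐ[ℂ] A)) (a : N → Aˣ) (μ : N × N → ℂˣ)
    (hμ : ∀ h h' : N, (a h : A) * σ h (a h' : A) = ((μ (h, h') : ℂ)) • (a (h * h') : A))
    (n : A ≃ₐ[ℂ] A) (hn : ∀ (h : N) (x : A), n (σ h x) = σ h (n x))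
    (w : N → Aˣ) (c : N → ℂˣ)
    (hc : ∀ h : N, n (a h : A) = (c h : ℂ) • ((w h : A) * (a h : A)))
    (hw : ∀ h h' : N, (w (h * h') : A) =
      (w h : A) * ((a h : A) * σ h (w h' : A) * (((a h)⁻¹ : Aˣ) : A))) :
    ∀ h h' : N, c (h * h') = c h * c h' := by
  intro h h'
  set u : Aˣ := w (h * h') * a (h * h') with hu
  have key : ((μ (h, h') : ℂ) * (c (h * h') : ℂ)) • (u : A)
      = ((μ (h, h') : ℂ) * ((c h : ℂ) * (c h' : ℂ))) • (u : A) := by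
    have LHS : n ((a h : A) * σ h (a h' : A))
        = ((μ (h, h') : ℂ) * (c (h * h') : ℂ)) • (u : A) := by
      rw [hμ, map_smul, hc, hu, smul_smul, Units.val_mul]
    have swap : (a h : A) * σ h (w h' : A)
        = (((w h)⁻¹ : Aˣ) : A) * (w (h * h') : A) * (a h : A) := by
      rw [hw h h', Units.inv_mul_cancel_left, Units.inv_mul_cancel_right]
    have expand : ((w h : A) * (a h : A)) * (σ h (w h' : A) * σ h (a h' : A))
        = (μ (h, h') : ℂ) • (u : A) := by
      calc ((w h : A) * (a h : A)) * (σ h (w h' : A) * σ h (a h' : A))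
          = (w h : A) * ((a h : A) * σ h (w h' : A)) * σ h (a h' : A) := by
            rw [mul_assoc, mul_assoc, mul_assoc]
        _ = (w h : A) * ((((w h)⁻¹ : Aˣ) : A) * (w (h * h') : A) * (a h : A))
              * σ h (a h' : A) := by rw [swap]
        _ = (w (h * h') : A) * ((a h : A) * σ h (a h' : A)) := by
            rw [mul_assoc (((w h)⁻¹ : Aˣ) : A), Units.mul_inv_cancel_left, mul_assoc]
        _ = (μ (h, h') : ℂ) • (u : A) := by
            rw [hμ, mul_smul_comm, hu, Units.val_mul]
    have RHS : n ((a h : A) * σ h (a h' : A))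
        = ((μ (h, h') : ℂ) * ((c h : ℂ) * (c h' : ℂ))) • (u : A) := by
      have sw : σ h (n (a h' : A))
          = (c h' : ℂ) • (σ h (w h' : A) * σ h (a h' : A)) := by
        rw [hc, map_smul, map_mul]
      rw [map_mul, hn, sw, hc h, smul_mul_assoc, mul_smul_comm, smul_smul,
        expand, smul_smul]
      ring_nf
    rw [← LHS, RHS]
  have key2 : ((μ (h, h') : ℂ) * (c (h * h') : ℂ)) • (1 : A)
      = ((μ (h, h') : ℂ) * ((c h : ℂ) * (c h' : ℂ))) • (1 : A) := by
    have := congrArg (· * ((u⁻¹ : Aˣ) : A)) key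
    simpa [smul_mul_assoc, Units.mul_inv] using this
  have key3 : algebraMap ℂ A ((μ (h, h') : ℂ) * (c (h * h') : ℂ))
      = algebraMap ℂ A ((μ (h, h') : ℂ) * ((c h : ℂ) * (c h' : ℂ))) := by
    simpa [Algebra.algebraMap_eq_smul_one] using key2
  have key4 : (μ (h, h') : ℂ) * (c (h * h') : ℂ)
      = (μ (h, h') : ℂ) * ((c h : ℂ) * (c h' : ℂ)) :=
    (algebraMap ℂ A).injective key3
  have : (c (h * h') : ℂ) = (c h : ℂ) * (c h' : ℂ) :=
    mul_left_cancel₀ (μ (h, h')).ne_zero key4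
  exact Units.ext (by push_cast; exact this)
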